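/- Let n be a nonempty finite type, M : Matrix n n ℂ, i : n, L ≥ 1 a natural number, and c : ℂ. Suppose that for every m : ℕ, the diagonal entry satisfies (M ^ (m * L)) i i = c ^ m. Then the spectral radius of M is at least |c|^(1/L). (Gelfand-formula lower bound: since |(M^n) i i| ≤ ‖M^n‖ for a submultiplicative matrix norm and ρ(M) = lim ‖M^n‖^{1/n}, coherent accumulation of a return amplitude along a length-L cycle forces ρ(M) ≥ |Tr[P M^L P]|^{1/L}. This is Eq. (spec_low_bound) of the paper, used to convert return cycles of the truncated Floquet channel into upper bounds on the Liouvillian gap.) -/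

import Mathlib

open scoped ENNReal NNReal
open Filter


open scoped ENNReal NNReal
open Filter

attribute [local instance] Matrix.linftyOpNormedRing Matrix.linftyOpNormedAlgebra

private lemma entry_nnnorm_le {n : Type*} [Fintype n] [DecidableEq n]
    (M : Matrix n n ℂ) (i j : n) : ‖M i j‖₊ ≤ ‖M‖₊ := by
  rw [Matrix.linfty_opNNNorm_def]
  exact le_trans (Finset.single_le_sum (f := fun j => ‖M i j‖₊)
    (fun _ _ => zero_le) (Finset.mem_univ j)) (Finset.le_sup (f := fun i => ∑ j, ‖M i j‖₊) (Finset.mem_univ i))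

private lemma key {n : Type*} [Fintype n] [DecidableEq n]
    [Nonempty n] (M : Matrix n n ℂ) (i : n) (L : ℕ) (hL : 1 ≤ L) (c : ℂ)
    (h : ∀ m : ℕ, (M ^ (m * L)) i i = c ^ m) :
    ((‖c‖₊ : ℝ≥0∞) ^ ((1 : ℝ) / L)) ≤ spectralRadius ℂ M := by
  have tend := spectrum.pow_nnnorm_pow_one_div_tendsto_nhds_spectralRadius M
  have tend2 : Tendsto (fun m : ℕ => (‖M ^ (m * L)‖₊ : ℝ≥0∞) ^ (1 / (m * L : ℕ) : ℝ))
      atTop (nhds (spectralRadius ℂ M)) :=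
    tend.comp (tendsto_atTop_atTop_of_monotone
      (fun a b hab => Nat.mul_le_mul_right L hab)
      (fun b => ⟨b, Nat.le_mul_of_pos_right b (Nat.lt_of_lt_of_le Nat.zero_lt_one hL)⟩))
  refine ge_of_tendsto tend2 ?_
  filter_upwards [eventually_ge_atTop 1] with m hm
  have hmL : (m * L : ℕ) ≠ 0 := by positivity
  have hb : (‖c‖₊ : ℝ≥0∞) ^ (m : ℕ) ≤ (‖M ^ (m * L)‖₊ : ℝ≥0∞) := by
    have : ‖c‖₊ ^ m ≤ ‖M ^ (m * L)‖₊ := by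
      calc ‖c‖₊ ^ m = ‖c ^ m‖₊ := (nnnorm_pow c m).symm
        _ = ‖(M ^ (m * L)) i i‖₊ := by rw [h m]
        _ ≤ ‖M ^ (m * L)‖₊ := entry_nnnorm_le _ i i
    exact_mod_cast this
  calc (‖c‖₊ : ℝ≥0∞) ^ ((1 : ℝ) / L)
      = ((‖c‖₊ : ℝ≥0∞) ^ (m : ℕ)) ^ (1 / (m * L : ℕ) : ℝ) := by
        rw [← ENNReal.rpow_natCast, ← ENNReal.rpow_mul]
        congr 1
        have hm0 : (m : ℝ) ≠ 0 := by positivity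
        have hL0 : (L : ℝ) ≠ 0 := by positivity
        push_cast
        field_simp
    _ ≤ (‖M ^ (m * L)‖₊ : ℝ≥0∞) ^ (1 / (m * L : ℕ) : ℝ) :=
        ENNReal.rpow_le_rpow hb (by positivity)



/-- The spectral radius of a square complex matrix: the maximum (supremum) of the
moduli of its eigenvalues. -/
noncomputable def specRad {n : Type*} [Fintype n] [DecidableEq n]
    (M : Matrix n n ℂ) : ℝ :=
  sSup ((fun z : ℂ => ‖z‖) '' spectrum ℂ M)

/-- **Gelfand-formula lower bound from a coherent return cycle** (Eq. (14) of the
paper).  If the diagonal entry of `M^{mL}` at `i` equals `c^m` for every `m`,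
then the spectral radius of `M` is at least `|c|^{1/L}`. -/
theorem spectralRadius_ge_of_return_cycle {n : Type*} [Fintype n] [DecidableEq n]
    [Nonempty n] (M : Matrix n n ℂ) (i : n) (L : ℕ) (hL : 1 ≤ L) (c : ℂ)
    (h : ∀ m : ℕ, (M ^ (m * L)) i i = c ^ m) :
    ‖c‖ ^ ((1 : ℝ) / L) ≤ specRad M := by
  unfold specRad
  have hne := spectrum.nonempty M
  have hcpt := spectrum.isCompact (𝕜 := ℂ) M
  obtain ⟨lam, hlam, hmax'⟩ := hcpt.exists_isMaxOn hne
    (continuous_norm.continuousOn)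
  have hmax : ∀ k ∈ spectrum ℂ M, ‖k‖ ≤ ‖lam‖ := hmax'
  have hsr : spectralRadius ℂ M ≤ (‖lam‖₊ : ℝ≥0∞) := by
    rw [spectralRadius]
    exact iSup₂_le fun k hk => by exact_mod_cast (hmax k hk)
  have h1 : ((‖c‖₊ : ℝ≥0∞) ^ ((1 : ℝ) / L)) ≤ (‖lam‖₊ : ℝ≥0∞) :=
    (key M i L hL c h).trans hsr
  have h2 : ‖c‖ ^ ((1 : ℝ) / L) ≤ ‖lam‖ := by
    rw [← ENNReal.coe_rpow_of_nonneg _ (by positivity), ENNReal.coe_le_coe] at h1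
    have := NNReal.coe_le_coe.mpr h1
    rwa [NNReal.coe_rpow, coe_nnnorm, coe_nnnorm] at this
  refine h2.trans (le_csSup ?_ ⟨lam, hlam, rfl⟩)
  exact (hcpt.image continuous_norm).bddAbove
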